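/- For every real x > 1, the box C_x = [−x, x]^{n−1} × [−1, 1] ⊆ ℝ^n satisfies g(C_x) ≥ 2x and h(C_x) ≥ x/2. -/

import Mathlib

open scoped BigOperators
open Pointwise Metric

noncomputable section

/-- `ℝ^n` with the Euclidean structure. -/
abbrev Euc (n : ℕ) := EuclideanSpace ℝ (Fin n)

/-- A point of `ℝ^n` is a lattice point if all its coordinates are integers. -/
def IsLatticePoint {n : ℕ} (x : Euc n) : Prop := ∀ i, ∃ m : ℤ, x i = (m : ℝ)

/-- A compact convex body, symmetric about the origin, with nonempty interior. -/
def IsSymmConvexBody {n : ℕ} (C : Set (Euc n)) : Prop :=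
  IsCompact C ∧ Convex ℝ C ∧ (∀ x ∈ C, -x ∈ C) ∧ (interior C).Nonempty

/-- `IsSuccMin C i l` means `l` is the `i`-th successive minimum of `C` w.r.t. `ℤ^n`:
the least `t > 0` such that `t • C` contains `i` linearly independent lattice points. -/
def IsSuccMin {n : ℕ} (C : Set (Euc n)) (i : ℕ) (l : ℝ) : Prop :=
  IsLeast {t : ℝ | 0 < t ∧ ∃ v : Fin i → Euc n, LinearIndependent ℝ v ∧
    ∀ j, IsLatticePoint (v j) ∧ v j ∈ t • C} l

/-- A finite set of points in `ℝ^n` is in general position if no `n` of its elements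
are linearly dependent. -/
def InGenPos {n : ℕ} (S : Finset (Euc n)) : Prop :=
  ∀ T ⊆ S, T.card = n →
    LinearIndependent ℝ (fun x : (T : Set (Euc n)) => (x : Euc n))

/-- `h(C)`: the maximum cardinality of a subset of `C ∩ ℤ^n` in general position. -/
def maxGenPos {n : ℕ} (C : Set (Euc n)) : ℕ :=
  sSup {k : ℕ | ∃ S : Finset (Euc n), S.card = k ∧ ↑S ⊆ C ∧
    (∀ x ∈ S, IsLatticePoint x) ∧ InGenPos S}

/-- `g(C)`: the minimum number of proper linear subspaces covering `C ∩ ℤ^n`. -/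
def coverNum {n : ℕ} (C : Set (Euc n)) : ℕ :=
  sInf {k : ℕ | ∃ F : Finset (Submodule ℝ (Euc n)), F.card = k ∧
    (∀ H ∈ F, H ≠ ⊤) ∧ ∀ x ∈ C, IsLatticePoint x → ∃ H ∈ F, x ∈ H}

/-- The box `C_x = [-x,x]^{n-1} × [-1,1] ⊆ ℝ^n`. -/
def boxBody (n : ℕ) (x : ℝ) : Set (Euc n) :=
  {y | ∀ i : Fin n, |y i| ≤ if (i : ℕ) < n - 1 then x else 1}


theorem card_filter_lt (n k : ℕ) (hk : k ≤ n) :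
    (Finset.univ.filter fun i : Fin n => (i : ℕ) < k).card = k := by
  classical
  have : (Finset.univ.filter fun i : Fin n => (i : ℕ) < k)
      = Finset.attachFin (Finset.range k) (fun m hm => by simp at hm; omega) := by
    ext i; simp
  rw [this, Finset.card_attachFin, Finset.card_range]

variable {n : ℕ}

/-- The layer with last coordinate `e`. -/
def layer (n N : ℕ) (e : ℤ) : Finset (Fin n → ℤ) :=
  Fintype.piFinset fun i => if (i : ℕ) < n - 1 then Finset.Icc (-(N:ℤ)) N else {e}

theorem card_layer (N : ℕ) (e : ℤ) (hn : 2 ≤ n) :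
    (layer n N e).card = (2*N+1)^(n-1) := by
  classical
  rw [layer, Fintype.card_piFinset]
  have h1 : ∀ i : Fin n, (if (i:ℕ) < n - 1 then Finset.Icc (-(N:ℤ)) N else {e}).card
      = if (i:ℕ) < n - 1 then 2*N+1 else 1 := by
    intro i
    split <;> simp [Int.card_Icc]
    omega
  rw [Finset.prod_congr rfl fun i _ => h1 i, Finset.prod_ite, Finset.prod_const,
    Finset.prod_const, one_pow, mul_one, card_filter_lt n (n-1) (by omega)]

/-- The target of the slice injection. -/
def sliceTarget (n N : ℕ) (e : ℤ) (i0 : Fin n) : Finset (Fin n → ℤ) :=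
  Fintype.piFinset fun i => if i = i0 then ({0} : Finset ℤ)
    else if (i : ℕ) < n - 1 then Finset.Icc (-(N:ℤ)) N else {e}

theorem card_sliceTarget (N : ℕ) (e : ℤ) (i0 : Fin n) (hn : 2 ≤ n) (h0 : (i0:ℕ) < n - 1) :
    (sliceTarget n N e i0).card = (2*N+1)^(n-2) := by
  classical
  rw [sliceTarget, Fintype.card_piFinset]
  have h1 : ∀ i : Fin n, (if i = i0 then ({0}:Finset ℤ)
      else if (i:ℕ) < n - 1 then Finset.Icc (-(N:ℤ)) N else {e}).card
      = if i = i0 then 1 else if (i:ℕ) < n - 1 then 2*N+1 else 1 := by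
    intro i
    split
    · simp
    · split <;> simp [Int.card_Icc]; omega
  rw [Finset.prod_congr rfl fun i _ => h1 i]
  rw [← Finset.mul_prod_erase Finset.univ _ (Finset.mem_univ i0)]
  rw [if_pos rfl, one_mul]
  have h2 : ∀ i ∈ Finset.univ.erase i0,
      (if i = i0 then 1 else if (i:ℕ) < n - 1 then 2*N+1 else 1)
      = if (i:ℕ) < n - 1 then 2*N+1 else 1 := by
    intro i hi
    rw [if_neg (Finset.mem_erase.mp hi).1]
  rw [Finset.prod_congr rfl h2, Finset.prod_ite, Finset.prod_const, Finset.prod_const,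
    one_pow, mul_one]
  congr 1
  have h3 : (Finset.univ.erase i0).filter (fun i : Fin n => (i:ℕ) < n - 1)
      = ((Finset.univ.filter fun i : Fin n => (i:ℕ) < n - 1)).erase i0 := by
    ext i; simp [Finset.mem_erase, and_comm]
  rw [h3, Finset.card_erase_of_mem (by simp [h0]), card_filter_lt n (n-1) (by omega)]
  omega

theorem slice_maps (N : ℕ) (e : ℤ) (i0 : Fin n) (a : Fin n → ℤ) (ha : a ∈ layer n N e) :
    Function.update a i0 0 ∈ sliceTarget n N e i0 := by
  classical
  rw [sliceTarget, Fintype.mem_piFinset]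
  intro i
  by_cases h : i = i0
  · subst h; simp
  · rw [Function.update_of_ne h, if_neg h]
    exact Fintype.mem_piFinset.mp ha i

theorem slice_inj (N : ℕ) (e : ℤ) (c : Fin n → ℝ) (i0 : Fin n) (hc : c i0 ≠ 0)
    {a b : Fin n → ℤ} (hae : ∑ i, c i * (a i : ℝ) = 0) (hbe : ∑ i, c i * (b i : ℝ) = 0)
    (h : Function.update a i0 0 = Function.update b i0 0) : a = b := by
  classical
  have hoff : ∀ i, i ≠ i0 → a i = b i := by
    intro i hi
    have := congrFun h i
    rwa [Function.update_of_ne hi, Function.update_of_ne hi] at this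
  have hsum : ∀ v : Fin n → ℤ, ∑ i, c i * (v i : ℝ)
      = c i0 * (v i0 : ℝ) + ∑ i ∈ Finset.univ.erase i0, c i * (v i : ℝ) := by
    intro v
    exact (Finset.add_sum_erase Finset.univ (fun i => c i * (v i : ℝ)) (Finset.mem_univ i0)).symm
  have heq : ∑ i ∈ Finset.univ.erase i0, c i * (a i : ℝ)
      = ∑ i ∈ Finset.univ.erase i0, c i * (b i : ℝ) := by
    refine Finset.sum_congr rfl fun i hi => ?_
    rw [hoff i (Finset.mem_erase.mp hi).1]
  have : c i0 * (a i0 : ℝ) = c i0 * (b i0 : ℝ) := by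
    have h1 := hsum a; have h2 := hsum b
    rw [hae] at h1; rw [hbe] at h2
    rw [heq] at h1
    linarith [h1, h2]
  have hii : (a i0 : ℝ) = (b i0 : ℝ) := mul_left_cancel₀ hc this
  have hii' : a i0 = b i0 := by exact_mod_cast hii
  funext i
  by_cases hi : i = i0
  · subst hi; exact hii'
  · exact hoff i hi

theorem slice_card_le (N : ℕ) (e : ℤ) (c : Fin n → ℝ) (i0 : Fin n) (hn : 2 ≤ n)
    (h0 : (i0:ℕ) < n - 1) (hc : c i0 ≠ 0) :
    (((layer n N e)).filter fun a => ∑ i, c i * (a i : ℝ) = 0).card ≤ (2*N+1)^(n-2) := by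
  classical
  rw [← card_sliceTarget N e i0 hn h0]
  refine Finset.card_le_card_of_injOn (fun a => Function.update a i0 0) ?_ ?_
  · intro a ha
    exact slice_maps N e i0 a (Finset.mem_filter.mp ha).1
  · intro a ha b hb h
    exact slice_inj N e c i0 hc (Finset.mem_filter.mp ha).2 (Finset.mem_filter.mp hb).2 h

theorem slice_card_le_zero (N : ℕ) (c : Fin n → ℝ) (i0 : Fin n) (hn : 2 ≤ n)
    (h0 : (i0:ℕ) < n - 1) (hc : c i0 ≠ 0) :
    (((layer n N 0).erase 0).filter fun a => ∑ i, c i * (a i : ℝ) = 0).card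
      ≤ (2*N+1)^(n-2) - 1 := by
  classical
  have hmem : (0 : Fin n → ℤ) ∈ sliceTarget n N 0 i0 := by
    rw [sliceTarget, Fintype.mem_piFinset]
    intro i
    split
    · simp
    · split <;> simp
  have hcard : ((sliceTarget n N 0 i0).erase 0).card = (2*N+1)^(n-2) - 1 := by
    rw [Finset.card_erase_of_mem hmem, card_sliceTarget N 0 i0 hn h0]
  rw [← hcard]
  refine Finset.card_le_card_of_injOn (fun a => Function.update a i0 0) ?_ ?_
  · intro a ha
    obtain ⟨ha1, ha2⟩ := Finset.mem_filter.mp ha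
    obtain ⟨hane, hal⟩ := Finset.mem_erase.mp ha1
    refine Finset.mem_erase.mpr ⟨?_, slice_maps N 0 i0 a hal⟩
    intro h0'
    apply hane
    have hoff : ∀ i, i ≠ i0 → a i = 0 := by
      intro i hi
      have h2 := congrFun h0' i
      simp only [Function.update_of_ne hi] at h2
      simpa using h2
    have hsum : ∑ i, c i * (a i : ℝ) = c i0 * (a i0 : ℝ) := by
      rw [← Finset.add_sum_erase Finset.univ (fun i => c i * (a i : ℝ)) (Finset.mem_univ i0)]
      have : ∀ i ∈ Finset.univ.erase i0, c i * (a i : ℝ) = 0 := by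
        intro i hi
        rw [hoff i (Finset.mem_erase.mp hi).1]; simp
      rw [Finset.sum_congr rfl this]; simp
    rw [ha2] at hsum
    have : (a i0 : ℝ) = 0 := by
      rcases mul_eq_zero.mp hsum.symm with h | h
      · exact absurd h hc
      · exact h
    have hz : a i0 = 0 := by exact_mod_cast this
    funext i
    by_cases hi : i = i0
    · subst hi; exact hz
    · exact hoff i hi
  · intro a ha b hb h
    obtain ⟨ha1, ha2⟩ := Finset.mem_filter.mp ha
    obtain ⟨hb1, hb2⟩ := Finset.mem_filter.mp hb
    exact slice_inj N 0 c i0 hc ha2 hb2 h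


def emb {n : ℕ} (a : Fin n → ℤ) : Euc n :=
  (WithLp.equiv 2 (Fin n → ℝ)).symm (fun i => (a i : ℝ))

theorem emb_apply {n : ℕ} (a : Fin n → ℤ) (i : Fin n) : emb a i = (a i : ℝ) := rfl


theorem exists_proper {n : ℕ} (hn : 2 ≤ n) (y : Euc n) :
    ∃ H : Submodule ℝ (Euc n), H ≠ ⊤ ∧ y ∈ H := by
  classical
  have h1 : Submodule.span ℝ ({y} : Set (Euc n)) < ⊤ := by
    apply span_lt_top_of_card_lt_finrank
    have h0 : ({y} : Set (Euc n)).toFinset.card ≤ 1 := by simp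
    have h2 : Module.finrank ℝ (Euc n) = n := finrank_euclideanSpace_fin
    omega
  have h2 : (Submodule.span ℝ ({y} : Set (Euc n)))ᗮ ≠ ⊥ := by
    intro hb
    exact h1.ne (Submodule.orthogonal_eq_bot_iff.mp hb)
  obtain ⟨u, hu, hu0⟩ := Submodule.ne_bot_iff _ |>.mp h2
  refine ⟨(ℝ ∙ u)ᗮ, ?_, ?_⟩
  · intro ht
    rw [Submodule.orthogonal_eq_top_iff, Submodule.span_singleton_eq_bot] at ht
    exact hu0 ht
  · rw [Submodule.mem_orthogonal_singleton_iff_inner_right, real_inner_comm]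
    exact (Submodule.mem_orthogonal _ _).mp hu y (Submodule.mem_span_singleton_self y)

theorem inner_emb {n : ℕ} (c : Euc n) (a : Fin n → ℤ) :
    (inner ℝ c (emb a) : ℝ) = ∑ i, c i * (a i : ℝ) := by
  simp [PiLp.inner_apply, RCLike.inner_apply, emb_apply, mul_comm]

theorem layer_last {n N : ℕ} {e : ℤ} {a : Fin n → ℤ} (hn : 2 ≤ n) (ha : a ∈ layer n N e) :
    a ⟨n-1, by omega⟩ = e := by
  have := Fintype.mem_piFinset.mp ha ⟨n-1, by omega⟩
  simp at this
  simpa using this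

-- key: a proper subspace H containing some layer-1 point has a normal vector with c i0 ≠ 0, i0 < n-1
theorem exists_normal_coord {n : ℕ} (hn : 2 ≤ n) {N : ℕ} {H : Submodule ℝ (Euc n)}
    (hH : H ≠ ⊤) {a1 : Fin n → ℤ} (ha1 : a1 ∈ layer n N 1) (hm : emb a1 ∈ H) :
    ∃ c : Euc n, (∀ v ∈ H, (inner ℝ c v : ℝ) = 0) ∧ ∃ i0 : Fin n, (i0:ℕ) < n - 1 ∧ c i0 ≠ 0 := by
  classical
  have h2 : Hᗮ ≠ ⊥ := fun hb => hH (Submodule.orthogonal_eq_bot_iff.mp hb)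
  obtain ⟨c, hc, hc0⟩ := Submodule.ne_bot_iff _ |>.mp h2
  have hperp : ∀ v ∈ H, (inner ℝ c v : ℝ) = 0 := by
    intro v hv
    have := (Submodule.mem_orthogonal H c).mp hc v hv
    rwa [real_inner_comm] at this
  refine ⟨c, hperp, ?_⟩
  by_contra hno
  push_neg at hno
  -- then c i = 0 for all i < n-1, and c last ≠ 0 would contradict via a1
  have hlast : c ⟨n-1, by omega⟩ ≠ 0 := by
    intro hcl
    apply hc0
    ext i
    by_cases hi : (i:ℕ) < n - 1
    · exact hno i hi
    · have : i = ⟨n-1, by omega⟩ := by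
        apply Fin.ext
        simp only []
        omega
      rw [this]; exact hcl
  have := hperp _ hm
  rw [inner_emb] at this
  have hsum : ∑ i, c i * (a1 i : ℝ) = c ⟨n-1, by omega⟩ := by
    rw [← Finset.add_sum_erase Finset.univ (fun i => c i * (a1 i : ℝ))
      (Finset.mem_univ (⟨n-1, by omega⟩ : Fin n))]
    have h1 : ∀ i ∈ Finset.univ.erase (⟨n-1, by omega⟩ : Fin n), c i * (a1 i : ℝ) = 0 := by
      intro i hi
      have hine := (Finset.mem_erase.mp hi).1
      have hilt : (i:ℕ) < n - 1 := by
        rcases Nat.lt_or_ge (i:ℕ) (n-1) with h | h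
        · exact h
        · exfalso; apply hine; apply Fin.ext; simp only []; omega
      rw [hno i hilt, zero_mul]
    rw [Finset.sum_congr rfl h1, Finset.sum_const, layer_last hn ha1]
    simp
  rw [hsum] at this
  exact hlast this

open Classical in
theorem L1 {n : ℕ} (hn : 2 ≤ n) (N : ℕ) {H : Submodule ℝ (Euc n)} (hH : H ≠ ⊤) :
    ((layer n N 1).filter fun a => emb a ∈ H).card ≤ (2*N+1)^(n-2) := by
  by_cases hw : ∃ a1 ∈ layer n N 1, emb a1 ∈ H
  · obtain ⟨a1, ha1, hm⟩ := hw
    obtain ⟨c, hperp, i0, hi0, hci0⟩ := exists_normal_coord hn hH ha1 hm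
    refine le_trans (Finset.card_le_card ?_) (slice_card_le N 1 (fun i => c i) i0 hn hi0 hci0)
    intro a ha
    obtain ⟨ha1', ha2'⟩ := Finset.mem_filter.mp ha
    refine Finset.mem_filter.mpr ⟨ha1', ?_⟩
    rw [← inner_emb]
    exact hperp _ ha2'
  · push_neg at hw
    have : ((layer n N 1).filter fun a => emb a ∈ H) = ∅ := by
      rw [Finset.filter_eq_empty_iff]
      exact hw
    rw [this]
    simp

open Classical in
theorem L2 {n : ℕ} (hn : 2 ≤ n) (N : ℕ) {H : Submodule ℝ (Euc n)} (hH : H ≠ ⊤)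
    {a1 : Fin n → ℤ} (ha1 : a1 ∈ layer n N 1) (hm : emb a1 ∈ H) :
    (((layer n N 0).erase 0).filter fun a => emb a ∈ H).card ≤ (2*N+1)^(n-2) - 1 := by
  obtain ⟨c, hperp, i0, hi0, hci0⟩ := exists_normal_coord hn hH ha1 hm
  refine le_trans (Finset.card_le_card ?_) (slice_card_le_zero N (fun i => c i) i0 hn hi0 hci0)
  intro a ha
  obtain ⟨ha1', ha2'⟩ := Finset.mem_filter.mp ha
  refine Finset.mem_filter.mpr ⟨ha1', ?_⟩
  rw [← inner_emb]
  exact hperp _ ha2'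

open Classical in
theorem cover_bound {n : ℕ} (hn : 2 ≤ n) (N : ℕ) (hN : 1 ≤ N)
    (F : Finset (Submodule ℝ (Euc n))) (hprop : ∀ H ∈ F, H ≠ ⊤)
    (hcov : ∀ a ∈ (layer n N 1) ∪ ((layer n N 0).erase 0), ∃ H ∈ F, emb a ∈ H) :
    2*N+2 ≤ F.card := by
  set B := (2*N+1)^(n-2) with hBdef
  have hB : 1 ≤ B := Nat.one_le_pow _ _ (by omega)
  have hpow : (2*N+1)^(n-1) = (2*N+1) * B := by
    have : n - 1 = (n-2) + 1 := by omega
    rw [this, pow_succ, mul_comm]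
  by_cases hA : ∃ H0 ∈ F, ∀ a ∈ layer n N 1, emb a ∉ H0
  · obtain ⟨H0, hH0F, hH0⟩ := hA
    have hsub : layer n N 1 ⊆ (F.erase H0).biUnion
        (fun H => (layer n N 1).filter fun a => emb a ∈ H) := by
      intro a ha
      obtain ⟨H, hHF, hmem⟩ := hcov a (Finset.mem_union_left _ ha)
      refine Finset.mem_biUnion.mpr ⟨H, ?_, Finset.mem_filter.mpr ⟨ha, hmem⟩⟩
      refine Finset.mem_erase.mpr ⟨?_, hHF⟩
      intro heq; subst heq
      exact hH0 a ha hmem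
    have h1 : (2*N+1)^(n-1) ≤ (F.erase H0).card * B := by
      calc (2*N+1)^(n-1) = (layer n N 1).card := (card_layer N 1 hn).symm
        _ ≤ _ := Finset.card_le_card hsub
        _ ≤ ∑ H ∈ F.erase H0, ((layer n N 1).filter fun a => emb a ∈ H).card :=
            Finset.card_biUnion_le
        _ ≤ ∑ _H ∈ F.erase H0, B := Finset.sum_le_sum fun H hH =>
            L1 hn N (hprop H (Finset.mem_of_mem_erase hH))
        _ = (F.erase H0).card * B := by rw [Finset.sum_const, smul_eq_mul]
    rw [hpow] at h1
    have h2 : 2*N+1 ≤ (F.erase H0).card := Nat.le_of_mul_le_mul_right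
      (by rw [mul_comm ((F.erase H0).card) B, mul_comm (2*N+1) B] at h1 ⊢; exact h1) (by omega)
    have h3 : (F.erase H0).card = F.card - 1 := Finset.card_erase_of_mem hH0F
    have h4 : 1 ≤ F.card := Finset.card_pos.mpr ⟨H0, hH0F⟩
    omega
  · push_neg at hA
    -- every H ∈ F contains a layer-1 point
    set P := (layer n N 1) ∪ ((layer n N 0).erase 0) with hPdef
    have hdisj : Disjoint (layer n N 1) ((layer n N 0).erase 0) := by
      rw [Finset.disjoint_left]
      intro a ha ha'
      have h1 := layer_last hn ha
      have h0 := layer_last hn (Finset.mem_of_mem_erase ha')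
      rw [h1] at h0
      exact one_ne_zero h0
    have hcardP : P.card + 1 = 2 * ((2*N+1) * B) := by
      rw [hPdef, Finset.card_union_of_disjoint hdisj, card_layer N 1 hn,
        Finset.card_erase_of_mem, card_layer N 0 hn]
      · rw [hpow]
        have hle : 1 ≤ (2*N+1) * B := Nat.one_le_iff_ne_zero.mpr (by positivity)
        omega
      · rw [layer, Fintype.mem_piFinset]
        intro i
        split <;> simp
    have hsum : P.card ≤ F.card * (2*B - 1) := by
      have hsub : P ⊆ F.biUnion (fun H => P.filter fun a => emb a ∈ H) := by
        intro a ha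
        obtain ⟨H, hHF, hmem⟩ := hcov a ha
        exact Finset.mem_biUnion.mpr ⟨H, hHF, Finset.mem_filter.mpr ⟨ha, hmem⟩⟩
      calc P.card ≤ _ := Finset.card_le_card hsub
        _ ≤ ∑ H ∈ F, (P.filter fun a => emb a ∈ H).card := Finset.card_biUnion_le
        _ ≤ ∑ _H ∈ F, (2*B - 1) := ?_
        _ = F.card * (2*B-1) := by rw [Finset.sum_const, smul_eq_mul]
      refine Finset.sum_le_sum fun H hHF => ?_
      obtain ⟨a1, ha1, hm⟩ := hA H hHF
      have hfu : P.filter (fun a => emb a ∈ H)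
          = ((layer n N 1).filter fun a => emb a ∈ H)
            ∪ (((layer n N 0).erase 0).filter fun a => emb a ∈ H) := by
        rw [hPdef, Finset.filter_union]
      calc (P.filter fun a => emb a ∈ H).card
          ≤ ((layer n N 1).filter fun a => emb a ∈ H).card
            + (((layer n N 0).erase 0).filter fun a => emb a ∈ H).card := by
            rw [hfu]; exact Finset.card_union_le _ _
        _ ≤ B + (B - 1) := Nat.add_le_add (L1 hn N (hprop H hHF)) (L2 hn N (hprop H hHF) ha1 hm)
        _ ≤ 2*B - 1 := by omega
    -- conclude
    by_contra hlt
    push_neg at hlt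
    have hm' : F.card ≤ 2*N+1 := by omega
    have h5 : F.card * (2*B-1) ≤ (2*N+1) * (2*B-1) := Nat.mul_le_mul_right _ hm'
    have h6 : (2*N+1) * (2*B-1) + (2*N+1) = 2 * ((2*N+1) * B) := by
      have : 2*B - 1 + 1 = 2*B := by omega
      calc (2*N+1) * (2*B-1) + (2*N+1) = (2*N+1) * ((2*B-1) + 1) := by ring
        _ = (2*N+1) * (2*B) := by rw [this]
        _ = 2 * ((2*N+1) * B) := by ring
    omega


theorem emb_mem_box {n N : ℕ} {x : ℝ} {e : ℤ} (hn : 2 ≤ n) (hNx : (N:ℝ) ≤ x) (hx : 1 ≤ x)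
    (he : |e| ≤ 1) {a : Fin n → ℤ} (ha : a ∈ layer n N e) : emb a ∈ boxBody n x := by
  intro i
  rw [emb_apply]
  have hi := Fintype.mem_piFinset.mp ha i
  by_cases h : (i:ℕ) < n - 1
  · rw [if_pos h]
    rw [if_pos h] at hi
    have := Finset.mem_Icc.mp hi
    rw [abs_le]
    constructor
    · calc -x ≤ -(N:ℝ) := by linarith
        _ ≤ (a i : ℝ) := by exact_mod_cast this.1
    · calc (a i : ℝ) ≤ (N:ℝ) := by exact_mod_cast this.2
        _ ≤ x := hNx
  · rw [if_neg h]
    rw [if_neg h] at hi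
    have : a i = e := by simpa using hi
    rw [this]
    have he' : ((|e| : ℤ) : ℝ) ≤ ((1:ℤ):ℝ) := Int.cast_le.mpr he
    simpa using he'

theorem lattice_emb {n : ℕ} (a : Fin n → ℤ) : ∀ i, ∃ m : ℤ, emb a i = (m : ℝ) :=
  fun i => ⟨a i, rfl⟩

open Classical in
theorem g_lower {n : ℕ} (hn : 2 ≤ n) {x : ℝ} (hx : 1 < x) {N : ℕ} (hN : 1 ≤ N)
    (hNx : (N:ℝ) ≤ x) {k : ℕ} (F : Finset (Submodule ℝ (Euc n))) (hcard : F.card = k)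
    (hprop : ∀ H ∈ F, H ≠ ⊤)
    (hcov : ∀ y ∈ boxBody n x, (∀ i, ∃ m : ℤ, y i = (m : ℝ)) → ∃ H ∈ F, y ∈ H) :
    2*N+2 ≤ k := by
  rw [← hcard]
  refine cover_bound hn N hN F hprop ?_
  intro a ha
  rcases Finset.mem_union.mp ha with h | h
  · exact hcov _ (emb_mem_box hn hNx hx.le (by norm_num) h) (lattice_emb a)
  · exact hcov _ (emb_mem_box hn hNx hx.le (by norm_num) (Finset.mem_of_mem_erase h))
      (lattice_emb a)

def bigBox (n N : ℕ) : Finset (Fin n → ℤ) :=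
  Fintype.piFinset fun _ => Finset.Icc (-(N:ℤ)) N

theorem lattice_mem_bigBox {n : ℕ} {x : ℝ} (hx : 1 ≤ x) {N : ℕ} (hfloor : (⌊x⌋ : ℤ) = (N:ℤ))
    {y : Euc n} (hy : y ∈ boxBody n x) (hl : ∀ i, ∃ m : ℤ, y i = (m : ℝ)) :
    ∃ a ∈ bigBox n N, emb a = y := by
  classical
  choose m hm using hl
  refine ⟨m, ?_, by ext i; exact (hm i).symm⟩
  rw [bigBox, Fintype.mem_piFinset]
  intro i
  have h1 : |y i| ≤ x := by
    refine le_trans (hy i) ?_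
    split <;> [exact le_refl x; exact hx]
  rw [hm i, abs_le] at h1
  rw [Finset.mem_Icc]
  constructor
  · have : ((-m i : ℤ) : ℝ) ≤ x := by push_cast; linarith
    have := Int.le_floor.mpr this
    omega
  · have := Int.le_floor.mpr h1.2
    omega

open Classical in
theorem cover_nonempty {n : ℕ} (hn : 2 ≤ n) {x : ℝ} (hx : 1 ≤ x) {N : ℕ}
    (hfloor : (⌊x⌋ : ℤ) = (N:ℤ)) :
    ∃ k, ∃ F : Finset (Submodule ℝ (Euc n)), F.card = k ∧
      (∀ H ∈ F, H ≠ ⊤) ∧ ∀ y ∈ boxBody n x, (∀ i, ∃ m : ℤ, y i = (m : ℝ)) → ∃ H ∈ F, y ∈ H := by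
  have hchoice : ∀ a : Fin n → ℤ, ∃ H : Submodule ℝ (Euc n), H ≠ ⊤ ∧ emb a ∈ H :=
    fun a => exists_proper hn (emb a)
  choose φ hφ1 hφ2 using hchoice
  refine ⟨((bigBox n N).image φ).card, (bigBox n N).image φ, rfl, ?_, ?_⟩
  · intro H hH
    obtain ⟨a, _, rfl⟩ := Finset.mem_image.mp hH
    exact hφ1 a
  · intro y hy hl
    obtain ⟨a, haB, hae⟩ := lattice_mem_bigBox hx hfloor hy hl
    exact ⟨φ a, Finset.mem_image_of_mem φ haB, hae ▸ hφ2 a⟩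

open Classical in
theorem genpos_bdd {n : ℕ} {x : ℝ} (hx : 1 ≤ x) {N : ℕ} (hfloor : (⌊x⌋ : ℤ) = (N:ℤ))
    {k : ℕ} {S : Finset (Euc n)} (hcard : S.card = k) (hsub : ↑S ⊆ boxBody n x)
    (hlat : ∀ y ∈ S, ∀ i, ∃ m : ℤ, y i = (m : ℝ)) :
    k ≤ ((bigBox n N).image emb).card := by
  classical
  rw [← hcard]
  refine Finset.card_le_card ?_
  intro y hy
  obtain ⟨a, haB, hae⟩ := lattice_mem_bigBox hx hfloor (hsub hy) (hlat y hy)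
  exact Finset.mem_image.mpr ⟨a, haB, hae⟩

def wv (n p k : ℕ) : Fin n → ℤ :=
  fun i => if (i:ℕ) < n - 1 then ((k:ℤ)^((i:ℕ)+1)) % p else 1

theorem det_key {n : ℕ} (hn : 2 ≤ n) {p : ℕ} (hp : p.Prime) (κ : Fin n → ℕ)
    (hκlt : ∀ i, κ i < p) (hκinj : Function.Injective κ) :
    ((Matrix.of fun i j => wv n p (κ i) j).map (Int.cast : ℤ → ℝ)).det ≠ 0 := by
  classical
  haveI := Fact.mk hp
  set A : Matrix (Fin n) (Fin n) ℤ := Matrix.of fun i j => wv n p (κ i) j with hA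
  set u : Fin n → ZMod p := fun i => (κ i : ZMod p) with hu
  have huinj : Function.Injective u := by
    intro i j h
    apply hκinj
    have := congrArg ZMod.val h
    rwa [ZMod.val_cast_of_lt (hκlt i), ZMod.val_cast_of_lt (hκlt j)] at this
  obtain ⟨m, rfl⟩ : ∃ m, n = m + 1 := ⟨n - 1, by omega⟩
  have hmap : A.map (Int.cast : ℤ → ZMod p)
      = (Matrix.vandermonde u).submatrix id (finRotate (m+1)) := by
    ext i j
    simp only [Matrix.map_apply, Matrix.submatrix_apply, Matrix.vandermonde, hA, Matrix.of_apply,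
      id_eq, wv]
    by_cases h : (j:ℕ) < (m+1) - 1
    · rw [if_pos h]
      have h1 : ((finRotate (m+1)) j : ℕ) = (j:ℕ) + 1 := by
        rw [finRotate_succ_apply, Fin.val_add_one]
        have : j ≠ Fin.last m := by
          intro hj; rw [hj] at h; simp at h
        rw [if_neg this]
      rw [h1]
      push_cast [ZMod.intCast_cast]
      rfl
    · rw [if_neg h]
      have hj : j = Fin.last m := by
        apply Fin.ext; simp only [Fin.val_last]; omega
      rw [hj]
      simp
  -- determinant of the permuted Vandermonde is nonzero mod p
  have hdet1 : (A.map (Int.cast : ℤ → ZMod p)).det ≠ 0 := by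
    rw [hmap, Matrix.det_permute']
    apply mul_ne_zero
    · rcases Int.units_eq_one_or (Equiv.Perm.sign (finRotate (m+1))) with h | h <;>
        rw [h] <;> simp
    · exact Matrix.det_vandermonde_ne_zero_iff.mpr huinj
  have hdetZ : A.det ≠ 0 := by
    intro h0
    apply hdet1
    have h1 := RingHom.map_det (Int.castRingHom (ZMod p)) A
    simp only [RingHom.mapMatrix_apply, Int.coe_castRingHom] at h1
    rw [← h1, h0]
    simp
  intro h0
  apply hdetZ
  have h1 := RingHom.map_det (Int.castRingHom ℝ) A
  simp only [RingHom.mapMatrix_apply, Int.coe_castRingHom] at h1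
  rw [← h1] at h0
  exact_mod_cast h0

theorem li_rows {n : ℕ} (hn : 2 ≤ n) {p : ℕ} (hp : p.Prime) (κ : Fin n → ℕ)
    (hκlt : ∀ i, κ i < p) (hκinj : Function.Injective κ) :
    LinearIndependent ℝ (fun i : Fin n => emb (wv n p (κ i))) := by
  have hdet := det_key hn hp κ hκlt hκinj
  have hunit : IsUnit ((Matrix.of fun i j => wv n p (κ i) j).map (Int.cast : ℤ → ℝ)) :=
    (Matrix.isUnit_iff_isUnit_det _).mpr (isUnit_iff_ne_zero.mpr hdet)
  have hli : LinearIndependent ℝ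
      (fun i => ((Matrix.of fun i j => wv n p (κ i) j).map (Int.cast : ℤ → ℝ)) i) :=
    Matrix.linearIndependent_rows_iff_isUnit.mpr hunit
  have hli2 := hli.map' (WithLp.linearEquiv 2 ℝ (Fin n → ℝ)).symm.toLinearMap
    (LinearEquiv.ker _)
  convert hli2 using 1
  · funext i; rfl
  · rfl

open Classical in
theorem genpos_T {n : ℕ} (hn : 2 ≤ n) {p : ℕ} (hp : p.Prime)
    (T : Finset (Euc n)) (hT : T ⊆ (Finset.range p).image (fun k => emb (wv n p k)))
    (hTcard : T.card = n) :
    LinearIndependent ℝ (fun y : (T : Set (Euc n)) => (y : Euc n)) := by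
  classical
  have hex : ∀ t : (T : Set (Euc n)), ∃ k, k < p ∧ emb (wv n p k) = (t : Euc n) := by
    intro t
    have ht : (t : Euc n) ∈ T := t.2
    obtain ⟨k, hk, hke⟩ := Finset.mem_image.mp (hT ht)
    exact ⟨k, Finset.mem_range.mp hk, hke⟩
  choose κ' hκ'lt hκ'eq using hex
  have hcard : Fintype.card (T : Set (Euc n)) = n := by
    calc Fintype.card (T : Set (Euc n))
        = Fintype.card T := Fintype.card_congr (Equiv.subtypeEquivRight fun x => Finset.mem_coe)
      _ = T.card := Fintype.card_coe T
      _ = n := hTcard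
  have e : (T : Set (Euc n)) ≃ Fin n := Fintype.equivFinOfCardEq hcard
  set κ : Fin n → ℕ := fun i => κ' (e.symm i) with hκ
  have hκinj : Function.Injective κ := by
    intro i j h
    have h2 : emb (wv n p (κ' (e.symm i))) = emb (wv n p (κ' (e.symm j))) := by
      show emb (wv n p (κ i)) = emb (wv n p (κ j)); rw [h]
    rw [hκ'eq, hκ'eq] at h2
    exact e.symm.injective (Subtype.ext h2)
  have hli := li_rows hn hp κ (fun i => hκ'lt _) hκinj
  have hcomp : (fun y : (T : Set (Euc n)) => (y : Euc n)) ∘ e.symm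
      = fun i : Fin n => emb (wv n p (κ i)) := by
    funext i
    exact (hκ'eq (e.symm i)).symm
  rw [← linearIndependent_equiv e.symm, hcomp]
  exact hli


theorem wv_mem_layer {n N p : ℕ} (hp0 : 0 < p) (hpN : p ≤ N) (k : ℕ) :
    wv n p k ∈ layer n N 1 := by
  rw [layer, Fintype.mem_piFinset]
  intro i
  rw [wv]
  by_cases h : (i:ℕ) < n - 1
  · rw [if_pos h, if_pos h, Finset.mem_Icc]
    have hpz : (p:ℤ) ≠ 0 := by exact_mod_cast hp0.ne'
    have h1 := Int.emod_nonneg ((k:ℤ)^((i:ℕ)+1)) hpz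
    have h2 := Int.emod_lt_of_pos ((k:ℤ)^((i:ℕ)+1)) (show (0:ℤ) < (p:ℤ) by exact_mod_cast hp0)
    omega
  · rw [if_neg h, if_neg h]
    simp

theorem emb_wv_injOn {n p : ℕ} (hn : 2 ≤ n) :
    ∀ k ∈ Finset.range p, ∀ j ∈ Finset.range p,
      emb (wv n p k) = emb (wv n p j) → k = j := by
  intro k hk j hj h
  have i0 : Fin n := ⟨0, by omega⟩
  have h0 : (0:ℕ) < n - 1 := by omega
  have hc := congrFun (congrArg (fun y : Euc n => (fun i => y i)) h) (⟨0, by omega⟩ : Fin n)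
  simp only [emb] at hc
  have hc' : ((wv n p k ⟨0, by omega⟩ : ℤ) : ℝ) = ((wv n p j ⟨0, by omega⟩ : ℤ) : ℝ) := hc
  have hz : wv n p k ⟨0, by omega⟩ = wv n p j ⟨0, by omega⟩ := by exact_mod_cast hc'
  rw [wv, wv] at hz
  simp only [if_pos h0] at hz
  rw [pow_one, pow_one] at hz
  rw [Int.emod_eq_of_lt (Int.natCast_nonneg k) (by exact_mod_cast Finset.mem_range.mp hk),
    Int.emod_eq_of_lt (Int.natCast_nonneg j) (by exact_mod_cast Finset.mem_range.mp hj)] at hz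
  exact_mod_cast hz

/-- For `x > 1`, the box `C_x = [-x,x]^{n-1} × [-1,1]` satisfies
`g(C_x) ≥ 2x` and `h(C_x) ≥ x/2`. -/
theorem box_coverNum_and_genPos (n : ℕ) (hn : 2 ≤ n) (x : ℝ) (hx : 1 < x) :
    2 * x ≤ (coverNum (boxBody n x) : ℝ) ∧ x / 2 ≤ (maxGenPos (boxBody n x) : ℝ) := by
  classical
  set N := ⌊x⌋.toNat with hNdef
  have hfl1 : 1 ≤ ⌊x⌋ := by
    rw [Int.le_floor]; push_cast; linarith
  have hfloor : (⌊x⌋ : ℤ) = (N:ℤ) := by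
    rw [hNdef]; exact (Int.toNat_of_nonneg (by omega)).symm
  have hN1 : 1 ≤ N := by omega
  have hNx : (N:ℝ) ≤ x := by
    have h := Int.floor_le x
    calc (N:ℝ) = ((⌊x⌋:ℤ):ℝ) := by exact_mod_cast congrArg (fun z : ℤ => (z:ℝ)) hfloor.symm
      _ ≤ x := h
  have hxN : x < (N:ℝ) + 1 := by
    have h := Int.lt_floor_add_one x
    calc x < (⌊x⌋:ℝ) + 1 := h
      _ = (N:ℝ) + 1 := by rw [show ((⌊x⌋:ℤ):ℝ) = (N:ℝ) by exact_mod_cast congrArg (fun z : ℤ => (z:ℝ)) hfloor]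
  constructor
  · -- the covering number bound
    rw [coverNum]
    have hne : {k : ℕ | ∃ F : Finset (Submodule ℝ (Euc n)), F.card = k ∧
        (∀ H ∈ F, H ≠ ⊤) ∧ ∀ y ∈ boxBody n x, IsLatticePoint y → ∃ H ∈ F, y ∈ H}.Nonempty := by
      obtain ⟨k, F, h1, h2, h3⟩ := cover_nonempty hn hx.le hfloor
      exact ⟨k, F, h1, h2, h3⟩
    have hlow : ∀ k ∈ {k : ℕ | ∃ F : Finset (Submodule ℝ (Euc n)), F.card = k ∧
        (∀ H ∈ F, H ≠ ⊤) ∧ ∀ y ∈ boxBody n x, IsLatticePoint y → ∃ H ∈ F, y ∈ H},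
        2*N+2 ≤ k := by
      rintro k ⟨F, hcard, hprop, hcov⟩
      exact g_lower hn hx hN1 hNx F hcard hprop hcov
    have h1 := le_csInf hne hlow
    calc 2 * x ≤ ((2*N+2 : ℕ):ℝ) := by push_cast; linarith
      _ ≤ _ := by exact_mod_cast h1
  · -- the general position bound
    rw [maxGenPos]
    have hbdd : BddAbove {k : ℕ | ∃ S : Finset (Euc n), S.card = k ∧ ↑S ⊆ boxBody n x ∧
        (∀ y ∈ S, IsLatticePoint y) ∧ InGenPos S} := by
      refine ⟨((bigBox n N).image emb).card, ?_⟩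
      rintro k ⟨S, hcard, hsub, hlat, -⟩
      exact genpos_bdd hx.le hfloor hcard hsub hlat
    by_cases hN2 : N = 1
    · -- small case: a singleton suffices
      have hmem : 1 ∈ {k : ℕ | ∃ S : Finset (Euc n), S.card = k ∧ ↑S ⊆ boxBody n x ∧
          (∀ y ∈ S, IsLatticePoint y) ∧ InGenPos S} := by
        refine ⟨{emb (wv n 1 0)}, Finset.card_singleton _, ?_, ?_, ?_⟩
        · intro y hy
          rw [Finset.coe_singleton, Set.mem_singleton_iff] at hy
          subst hy
          exact emb_mem_box hn hNx hx.le (by norm_num) (wv_mem_layer one_pos hN1 0)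
        · intro y hy
          rw [Finset.mem_singleton] at hy
          subst hy
          exact lattice_emb _
        · intro T hT hTcard
          exfalso
          have := Finset.card_le_card hT
          rw [hTcard, Finset.card_singleton] at this
          omega
      have h2 : (1:ℕ) ≤ sSup {k : ℕ | ∃ S : Finset (Euc n), S.card = k ∧ ↑S ⊆ boxBody n x ∧
          (∀ y ∈ S, IsLatticePoint y) ∧ InGenPos S} := le_csSup hbdd hmem
      have hx2 : x < 2 := by
        rw [hN2] at hxN; push_cast at hxN; linarith
      calc x / 2 ≤ 1 := by linarith
        _ ≤ _ := by exact_mod_cast h2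
    · -- main case: Bertrand's postulate
      have hN2' : 2 ≤ N := by omega
      set q := N / 2 with hq
      have hq1 : 1 ≤ q := by omega
      obtain ⟨p, hp, hqp, hp2q⟩ := Nat.exists_prime_lt_and_le_two_mul q (by omega)
      have hpN : p ≤ N := by omega
      have hmem : p ∈ {k : ℕ | ∃ S : Finset (Euc n), S.card = k ∧ ↑S ⊆ boxBody n x ∧
          (∀ y ∈ S, IsLatticePoint y) ∧ InGenPos S} := by
        refine ⟨(Finset.range p).image (fun k => emb (wv n p k)), ?_, ?_, ?_, ?_⟩
        · rw [Finset.card_image_of_injOn (emb_wv_injOn hn), Finset.card_range]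
        · intro y hy
          rw [Finset.coe_image] at hy
          obtain ⟨k, -, rfl⟩ := hy
          exact emb_mem_box hn hNx hx.le (by norm_num) (wv_mem_layer hp.pos hpN k)
        · intro y hy
          obtain ⟨k, -, rfl⟩ := Finset.mem_image.mp hy
          exact lattice_emb _
        · intro T hT hTcard
          exact genpos_T hn hp T hT hTcard
      have h2 : p ≤ sSup {k : ℕ | ∃ S : Finset (Euc n), S.card = k ∧ ↑S ⊆ boxBody n x ∧
          (∀ y ∈ S, IsLatticePoint y) ∧ InGenPos S} := le_csSup hbdd hmem
      have hqp' : (q:ℝ) + 1 ≤ (p:ℝ) := by exact_mod_cast hqp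
      have hN2q : (N:ℝ) ≤ 2*(q:ℝ) + 1 := by
        have : N ≤ 2*q + 1 := by omega
        exact_mod_cast this
      calc x / 2 ≤ (p:ℝ) := by linarith
        _ ≤ _ := by exact_mod_cast h2
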